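/- Suppose σ > 0 satisfies xᵀ(B + h_p⟨B⟩)RBᵀx ≥ σ|x|₂² for all x ∈ ℝ^N. Let d : [0,∞) → ℝ^N be measurable with ∫₀^∞ |d(s)|₂² ds < ∞, and let (p, Δ) : [0,∞) → ℝ^N × ℝ^N be differentiable and satisfy the closed-loop string dynamics ṗ(t) = −(B + h_p⟨B⟩)RBᵀ(M⁻¹p(t) − v₀𝟙) + B A Δ(t) + d(t), Δ̇(t) = −Bᵀ(M⁻¹p(t) − v₀𝟙) for all t ≥ 0. Then for every t ≥ 0, H(p(t), Δ(t)) ≤ H(p(0), Δ(0)) + (1/(2σ)) ∫₀^∞ |d(s)|₂² ds. -/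

import Mathlib

open Matrix MeasureTheory Real

/-- The N×N matrix with 1 on the diagonal and -1 on the first superdiagonal. -/
noncomputable def Bmat (N : ℕ) : Matrix (Fin N) (Fin N) ℝ :=
  Matrix.of fun i j => if j = i then 1 else if (j : ℕ) = (i : ℕ) + 1 then -1 else 0

/-- Entrywise absolute value of `Bmat N`. -/
noncomputable def absB (N : ℕ) : Matrix (Fin N) (Fin N) ℝ :=
  Matrix.of fun i j => |Bmat N i j|

/-- Euclidean norm of a vector in ℝ^N. -/
noncomputable def norm2 {N : ℕ} (x : Fin N → ℝ) : ℝ := Real.sqrt (x ⬝ᵥ x)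

/-- The Hamiltonian H(p, Δ) = ½(p − v₀M𝟙)ᵀ M⁻¹ (p − v₀M𝟙) + ½ Δᵀ A Δ. -/
noncomputable def Ham {N : ℕ} (v0 : ℝ) (m a : Fin N → ℝ) (p Δ : Fin N → ℝ) : ℝ :=
  (1/2) * ((p - v0 • (Matrix.diagonal m *ᵥ fun _ => 1)) ⬝ᵥ
      (Matrix.diagonal (fun i => (m i)⁻¹) *ᵥ (p - v0 • (Matrix.diagonal m *ᵥ fun _ => 1)))) +
  (1/2) * (Δ ⬝ᵥ (Matrix.diagonal a *ᵥ Δ))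

private lemma ham_eq_sum {N : ℕ} (v0 : ℝ) (m a : Fin N → ℝ) (P D : Fin N → ℝ) :
    Ham v0 m a P D =
      ∑ i, ((1/2) * (m i)⁻¹ * (P i - v0 * m i)^2 + (1/2) * a i * (D i)^2) := by
  simp only [Ham, dotProduct, Matrix.mulVec_diagonal, Pi.sub_apply, Pi.smul_apply,
    smul_eq_mul, Finset.mul_sum, ← Finset.sum_add_distrib]
  refine Finset.sum_congr rfl fun i _ => ?_
  ring

private lemma young_ineq (σ x y : ℝ) (hσ : 0 < σ) :
    x * y ≤ σ * (x * x) + 1/(4*σ) * (y * y) := by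
  have h4 : (0:ℝ) < 4*σ := by linarith
  have key : σ*(x*x) + 1/(4*σ)*(y*y) - x*y = (2*σ*x - y)^2 / (4*σ) := by
    field_simp
    ring
  have h := div_nonneg (sq_nonneg (2*σ*x - y)) h4.le
  linarith [key, h]

theorem stmt_0 (N : ℕ) (hN : 1 ≤ N) (hp : ℝ) (hhp : 0 ≤ hp) (v0 : ℝ)
    (r a m : Fin N → ℝ) (hr : ∀ i, 0 < r i) (ha : ∀ i, 0 < a i) (hm : ∀ i, 0 < m i)
    (σ : ℝ) (hσ : 0 < σ)
    (hσmin : ∀ x : Fin N → ℝ,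
      σ * (x ⬝ᵥ x) ≤ x ⬝ᵥ (((Bmat N + hp • absB N) * Matrix.diagonal r * (Bmat N)ᵀ) *ᵥ x))
    (d : ℝ → Fin N → ℝ) (hdmeas : Measurable d)
    (hdint : MeasureTheory.IntegrableOn (fun s => d s ⬝ᵥ d s) (Set.Ioi (0 : ℝ)))
    (p Δ : ℝ → Fin N → ℝ)
    (hdyn : ∀ t : ℝ, 0 ≤ t →
      HasDerivAt p
        (-(((Bmat N + hp • absB N) * Matrix.diagonal r * (Bmat N)ᵀ) *ᵥ
            (Matrix.diagonal (fun i => (m i)⁻¹) *ᵥ p t - v0 • (fun _ : Fin N => (1:ℝ))))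
          + (Bmat N * Matrix.diagonal a) *ᵥ Δ t + d t) t ∧
      HasDerivAt Δ
        (-((Bmat N)ᵀ *ᵥ (Matrix.diagonal (fun i => (m i)⁻¹) *ᵥ p t - v0 • (fun _ : Fin N => (1:ℝ))))) t)
    (t : ℝ) (ht : 0 ≤ t) :
    Ham v0 m a (p t) (Δ t) ≤ Ham v0 m a (p 0) (Δ 0) +
      (1 / (2 * σ)) * ∫ s in Set.Ioi (0 : ℝ), d s ⬝ᵥ d s := by
  classical
  set L : Matrix (Fin N) (Fin N) ℝ :=
    (Bmat N + hp • absB N) * Matrix.diagonal r * (Bmat N)ᵀ with hL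
  set e : ℝ → Fin N → ℝ :=
    fun s => Matrix.diagonal (fun i => (m i)⁻¹) *ᵥ p s - v0 • (fun _ : Fin N => (1:ℝ)) with he
  set P' : ℝ → Fin N → ℝ :=
    fun s => -(L *ᵥ e s) + (Bmat N * Matrix.diagonal a) *ᵥ Δ s + d s with hP'
  set D' : ℝ → Fin N → ℝ := fun s => -((Bmat N)ᵀ *ᵥ e s) with hD'
  set F : ℝ → ℝ := fun s => Ham v0 m a (p s) (Δ s) with hF
  set G : ℝ → ℝ :=
    fun s => -(e s ⬝ᵥ (L *ᵥ e s)) + e s ⬝ᵥ d s with hG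
  have he_apply : ∀ s i, e s i = (m i)⁻¹ * (p s i - v0 * m i) := by
    intro s i
    have hmne : (m i) ≠ 0 := (hm i).ne'
    simp only [he, Pi.sub_apply, Matrix.mulVec_diagonal, Pi.smul_apply, smul_eq_mul, mul_one]
    field_simp
  have hd2nonneg : ∀ s, (0:ℝ) ≤ d s ⬝ᵥ d s :=
    fun s => Finset.sum_nonneg fun i _ => mul_self_nonneg _
  -- derivative of F
  have hFderivAt : ∀ s, 0 ≤ s → HasDerivAt F (G s) s := by
    intro s hs
    obtain ⟨hps, hΔs⟩ := hdyn s hs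
    have hps' : HasDerivAt p (P' s) s := by
      simpa only [hP', hL, he] using hps
    have hΔs' : HasDerivAt Δ (D' s) s := by
      simpa only [hD', he] using hΔs
    have hpi : ∀ i, HasDerivAt (fun u => p u i) (P' s i) s := fun i => hasDerivAt_pi.1 hps' i
    have hΔi : ∀ i, HasDerivAt (fun u => Δ u i) (D' s i) s := fun i => hasDerivAt_pi.1 hΔs' i
    have key : HasDerivAt F
        (∑ i, ((m i)⁻¹ * (p s i - v0 * m i) * P' s i + a i * Δ s i * D' s i)) s := by
      have hFeq : F = fun u =>
          ∑ i, ((1/2) * (m i)⁻¹ * (p u i - v0 * m i)^2 + (1/2) * a i * (Δ u i)^2) := by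
        funext u
        exact ham_eq_sum v0 m a (p u) (Δ u)
      rw [hFeq]
      apply HasDerivAt.fun_sum
      intro i _
      have h1 := (((hpi i).sub_const (v0 * m i)).pow 2).const_mul ((1/2) * (m i)⁻¹)
      have h2 := ((hΔi i).pow 2).const_mul ((1/2) * a i)
      convert h1.add h2 using 1
      · funext y
        simp only [Pi.add_apply, Pi.pow_apply]
      · simp only [show (2:ℕ) - 1 = 1 from rfl, pow_one, Nat.cast_ofNat]
        ring
    -- identify the derivative with G s
    have hcancel : e s ⬝ᵥ ((Bmat N * Matrix.diagonal a) *ᵥ Δ s)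
        = (Matrix.diagonal a *ᵥ Δ s) ⬝ᵥ ((Bmat N)ᵀ *ᵥ e s) := by
      rw [← Matrix.mulVec_mulVec, Matrix.dotProduct_mulVec, ← Matrix.mulVec_transpose,
        dotProduct_comm]
    have hGdot : G s = e s ⬝ᵥ P' s + (Matrix.diagonal a *ᵥ Δ s) ⬝ᵥ D' s := by
      simp only [hG, hP', hD', dotProduct_add, dotProduct_neg, hcancel]
      ring
    have hsum : G s = ∑ i, ((m i)⁻¹ * (p s i - v0 * m i) * P' s i + a i * Δ s i * D' s i) := by
      rw [hGdot]
      simp only [dotProduct, Matrix.mulVec_diagonal, ← Finset.sum_add_distrib]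
      refine Finset.sum_congr rfl fun i _ => ?_
      rw [he_apply s i]
      try ring
    rw [hsum]
    exact key
  -- pointwise bound on the derivative
  have hbound : ∀ s, 0 ≤ s → G s ≤ (1 / (2 * σ)) * (d s ⬝ᵥ d s) := by
    intro s _
    have h3 : σ * (e s ⬝ᵥ e s) ≤ e s ⬝ᵥ (L *ᵥ e s) := by
      rw [hL]
      exact hσmin (e s)
    have h4 : e s ⬝ᵥ d s ≤ σ * (e s ⬝ᵥ e s) + 1/(4*σ) * (d s ⬝ᵥ d s) := by
      simp only [dotProduct, Finset.mul_sum, ← Finset.sum_add_distrib]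
      exact Finset.sum_le_sum fun i _ => young_ineq σ (e s i) (d s i) hσ
    have h5 : 1/(4*σ) * (d s ⬝ᵥ d s) ≤ 1/(2*σ) * (d s ⬝ᵥ d s) := by
      apply mul_le_mul_of_nonneg_right _ (hd2nonneg s)
      rw [div_le_div_iff₀ (by linarith) (by linarith)]
      linarith
    simp only [hG]
    linarith
  -- continuity of F on [0, t]
  have hFcont : ContinuousOn F (Set.Icc 0 t) := fun s hs =>
    (hFderivAt s hs.1).continuousAt.continuousWithinAt
  -- integrability of the bound
  have hφint : IntegrableOn (fun s => (1 / (2 * σ)) * (d s ⬝ᵥ d s)) (Set.Icc 0 t) := by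
    have hInt : IntegrableOn (fun s => d s ⬝ᵥ d s) (Set.Icc 0 t) := by
      rw [integrableOn_Icc_iff_integrableOn_Ioc]
      exact hdint.mono_set Set.Ioc_subset_Ioi_self
    exact hInt.const_mul _
  have main := intervalIntegral.sub_le_integral_of_hasDeriv_right_of_le (g := F) (g' := G)
    (φ := fun s => (1 / (2 * σ)) * (d s ⬝ᵥ d s)) ht hFcont
    (fun s hs => (hFderivAt s hs.1.le).hasDerivWithinAt)
    hφint (fun s hs => hbound s hs.1.le)
  have h1 : (∫ y in (0:ℝ)..t, (1 / (2 * σ)) * (d y ⬝ᵥ d y))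
      = (1 / (2 * σ)) * ∫ y in Set.Ioc (0:ℝ) t, (d y ⬝ᵥ d y) := by
    rw [intervalIntegral.integral_of_le ht, MeasureTheory.integral_const_mul]
  have h2 : (∫ y in Set.Ioc (0:ℝ) t, (d y ⬝ᵥ d y)) ≤ ∫ y in Set.Ioi (0:ℝ), (d y ⬝ᵥ d y) := by
    apply setIntegral_mono_set hdint
    · exact Filter.Eventually.of_forall fun s => hd2nonneg s
    · exact Set.Ioc_subset_Ioi_self.eventuallyLE
  have hcpos : (0:ℝ) ≤ 1 / (2 * σ) := by positivity
  have h6 : (1 / (2 * σ)) * (∫ y in Set.Ioc (0:ℝ) t, (d y ⬝ᵥ d y))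
      ≤ (1 / (2 * σ)) * ∫ y in Set.Ioi (0:ℝ), (d y ⬝ᵥ d y) :=
    mul_le_mul_of_nonneg_left h2 hcpos
  rw [h1] at main
  have hFt : F t = Ham v0 m a (p t) (Δ t) := rfl
  have hF0 : F 0 = Ham v0 m a (p 0) (Δ 0) := rfl
  linarith [main, h6]
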